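/- Let C be a category with finite limits, D an exact category, and F : C → D a finite-limit-preserving, full and faithful, covering functor whose image consists up to isomorphism of the projectives of D. Then for any two objects X, Y of C, every subobject of F(X) × F(Y) in D that is an equivalence relation and whose domain is projective is isomorphic to the image under F of an equivalence relation in C. -/

import Mathlib

open CategoryTheory CategoryTheory.Limits

universe v u v₂ u₂

/-- A morphism is a cover if the only subobject of its codomain through which
it factors is the maximal one. -/
def IsCover {C : Type u} [Category.{v} C] {X Y : C} (f : Y ⟶ X) : Prop :=
  ∀ ⦃Z : C⦄ (m : Z ⟶ X) (g : Y ⟶ Z), Mono m → g ≫ m = f → IsIso m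

/-- An object is projective (w.r.t. covers) if every cover onto it splits. -/
def CovProjective {C : Type u} [Category.{v} C] (P : C) : Prop :=
  ∀ ⦃X : C⦄ (q : X ⟶ P), IsCover q → ∃ s : P ⟶ X, s ≫ q = 𝟙 P

/-- A category has enough projectives if every object is covered by a projective. -/
def HasEnoughCovProjectives (C : Type u) [Category.{v} C] : Prop :=
  ∀ X : C, ∃ (P : C) (q : P ⟶ X), CovProjective P ∧ IsCover q

/-- A regular category: finite limits, cover-mono factorizations,
and covers stable under pullback. -/
class RegularCat (C : Type u) [Category.{v} C] extends HasFiniteLimits C : Prop where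
  factor : ∀ {X Y : C} (f : X ⟶ Y), ∃ (Z : C) (e : X ⟶ Z) (m : Z ⟶ Y),
    IsCover e ∧ Mono m ∧ e ≫ m = f
  pullback_cover : ∀ {X Y Z L : C} (f : X ⟶ Y) (g : Z ⟶ Y)
    (p₁ : L ⟶ X) (p₂ : L ⟶ Z), IsPullback p₁ p₂ f g → IsCover f → IsCover p₂
section Exactness

variable {C : Type u} [Category.{v} C]

/-- The relation on generalized elements induced by a relation r : R ⟶ X ⨯ X. -/
def relOf [HasFiniteLimits C] {R X : C} (r : R ⟶ X ⨯ X) {A : C} (x y : A ⟶ X) : Prop :=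
  ∃ a : A ⟶ R, a ≫ r = prod.lift x y

/-- r : R ⟶ X ⨯ X is an equivalence relation: it is a subobject of X ⨯ X and
induces an equivalence relation on every hom-set Hom(A, X). -/
structure IsEquivRel [HasFiniteLimits C] {R X : C} (r : R ⟶ X ⨯ X) : Prop where
  mono : Mono r
  iseqv : ∀ A : C, Equivalence (fun x y : A ⟶ X => relOf r x y)

/-- The fork r₀, r₁ ⇉ X → Q is exact: it is both a pullback and a coequalizer. -/
structure IsExactFork {R X Q : C} (r₀ r₁ : R ⟶ X) (q : X ⟶ Q) : Prop where
  w : r₀ ≫ q = r₁ ≫ q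
  isPullback : IsPullback r₀ r₁ q q
  isCoequalizer : Nonempty (IsColimit (Cofork.ofπ q w))

/-- The fork is stably exact: it is exact and remains exact after pullback
along any map P ⟶ Q. -/
def IsStablyExactFork [HasFiniteLimits C] {R X Q : C} (r₀ r₁ : R ⟶ X) (q : X ⟶ Q) : Prop :=
  ∃ w : r₀ ≫ q = r₁ ≫ q, Nonempty (IsColimit (Cofork.ofπ q w)) ∧ IsPullback r₀ r₁ q q ∧
    ∀ {P : C} (p : P ⟶ Q),
      IsExactFork
        (pullback.lift (pullback.fst (r₀ ≫ q) p ≫ r₀) (pullback.snd (r₀ ≫ q) p)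
          (by simpa using pullback.condition) :
            pullback (r₀ ≫ q) p ⟶ pullback q p)
        (pullback.lift (pullback.fst (r₀ ≫ q) p ≫ r₁) (pullback.snd (r₀ ≫ q) p)
          (by rw [Category.assoc, ← w]; simpa using pullback.condition))
        (pullback.snd q p)

/-- An exact category: regular, and every equivalence relation fits into a
stably exact fork. -/
class ExactCat (C : Type u) [Category.{v} C] extends RegularCat C : Prop where
  exact_quotient : ∀ {R X : C} (r : R ⟶ X ⨯ X), IsEquivRel r →
    ∃ (Q : C) (q : X ⟶ Q), IsStablyExactFork (r ≫ prod.fst) (r ≫ prod.snd) q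

end Exactness

/-- Let F : C ⥤ D exhibit the exact category D as the ex/lex-completion of a
finitely complete C (F preserves finite limits, is fully faithful, covering,
and its image consists, up to isomorphism, of the projectives of D). Then
every equivalence-relation subobject of F(X) ⨯ F(X) with projective domain is
(up to isomorphism over the product comparison) the image under F of an
equivalence relation in C. -/
theorem equivRel_on_image_is_image_of_equivRel
    {C : Type u} [Category.{v} C] {D : Type u₂} [Category.{v₂} D]
    [HasFiniteLimits C] [ExactCat D]
    (F : C ⥤ D) [F.Full] [F.Faithful]
    (hlex : PreservesFiniteLimits F)
    (hcovering : ∀ Z : D, ∃ (A : C) (c : F.obj A ⟶ Z), IsCover c)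
    (hproj : ∀ A : C, CovProjective (F.obj A))
    (hprojonto : ∀ Q : D, CovProjective Q → ∃ A : C, Nonempty (F.obj A ≅ Q))
    (X : C) (R : D) (r : R ⟶ F.obj X ⨯ F.obj X)
    (hr : IsEquivRel r) (hR : CovProjective R) :
    ∃ (R₀ : C) (r₀ : R₀ ⟶ X ⨯ X), IsEquivRel r₀ ∧
      ∃ e : F.obj R₀ ≅ R, e.hom ≫ r = F.map r₀ ≫ prodComparison F X X := by
  haveI := hlex
  obtain ⟨A, ⟨φ⟩⟩ := hprojonto R hR
  haveI : IsIso (prodComparison F X X) := inferInstance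
  obtain ⟨r₀, hr₀⟩ := F.map_surjective (φ.hom ≫ r ≫ inv (prodComparison F X X))
  have hcomm : φ.hom ≫ r = F.map r₀ ≫ prodComparison F X X := by
    rw [hr₀]; simp
  have hlift : ∀ {B : C} (x y : B ⟶ X),
      F.map (prod.lift x y) ≫ prodComparison F X X = prod.lift (F.map x) (F.map y) := by
    intro B x y
    apply Limits.prod.hom_ext <;> simp only [Category.assoc, prodComparison_fst, prodComparison_snd, ← F.map_comp, prod.lift_fst, prod.lift_snd]
  have key : ∀ {B : C} (x y : B ⟶ X),
      relOf r (F.map x) (F.map y) ↔ relOf r₀ x y := by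
    intro B x y
    constructor
    · rintro ⟨b, hb⟩
      obtain ⟨a, ha⟩ := F.map_surjective (b ≫ φ.inv)
      refine ⟨a, F.map_injective ?_⟩
      rw [F.map_comp, ha, hr₀, ← cancel_mono (prodComparison F X X)]
      simp [hlift, hb]
    · rintro ⟨a, ha⟩
      refine ⟨F.map a ≫ φ.hom, ?_⟩
      rw [Category.assoc, hcomm, ← Category.assoc, ← F.map_comp, ha, hlift]
  have hmono : Mono r₀ := by
    have : Mono (F.map r₀) := by
      rw [hr₀]
      have := hr.mono
      infer_instance
    exact F.mono_of_mono_map this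
  refine ⟨A, r₀, ⟨hmono, fun B => ?_⟩, φ, hcomm⟩
  constructor
  · intro x
    exact (key x x).1 ((hr.iseqv (F.obj B)).refl (F.map x))
  · intro x y h
    exact (key y x).1 ((hr.iseqv (F.obj B)).symm ((key x y).2 h))
  · intro x y z h₁ h₂
    exact (key x z).1 ((hr.iseqv (F.obj B)).trans ((key x y).2 h₁) ((key y z).2 h₂))
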